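/- Let λ > 0 and let Ñ be a Poisson random variable with parameter λ. Suppose ε ∈ (0,1) is small enough that n* := -λ·ln ε satisfies n* ≥ 2λ and λ·(ln(-ln ε) - 1) ≥ 1 and e^{-λ}/(√(2π n*)·(1 + 1/ln ε)) ≤ 1/2. Then Pr{Ñ ≥ n*} ≤ ε/2. -/

import Mathlib

set_option maxHeartbeats 1000000

open Real Filter

lemma fact_aux (N k : ℕ) : N.factorial * N ^ k ≤ (N + k).factorial := by
  induction k with
  | zero => simp
  | succ k ih =>
    calc N.factorial * N ^ (k+1) = N.factorial * N ^ k * N := by ring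
    _ ≤ (N + k).factorial * N := by gcongr
    _ ≤ (N + k).factorial * (N + k + 1) := by gcongr <;> omega
    _ = (N + (k+1)).factorial := by
        rw [show N + (k+1) = (N+k)+1 from rfl, Nat.factorial_succ]; ring

theorem poisson_tail (lam ε : ℝ) (hlam : 0 < lam) (hε0 : 0 < ε) (hε1 : ε < 1)
    (h1 : (2 : ℝ) * lam ≤ -lam * Real.log ε)
    (h2 : 1 ≤ lam * (Real.log (-Real.log ε) - 1))
    (h3 : Real.exp (-lam) / (Real.sqrt (2 * Real.pi * (-lam * Real.log ε)) * (1 + 1 / Real.log ε))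
            ≤ 1 / 2) :
    (∑' n : ℕ, if -lam * Real.log ε ≤ (n : ℝ) then
        Real.exp (-lam) * lam ^ n / (Nat.factorial n : ℝ) else 0) ≤ ε / 2 := by
  have hlogε : Real.log ε < 0 := Real.log_neg hε0 hε1
  set L : ℝ := -Real.log ε with hLdef
  have hL0 : 0 < L := by simp only [hLdef]; linarith
  have heq : -lam * Real.log ε = lam * L := by rw [hLdef]; ring
  have hle : Real.log ε = -L := by rw [hLdef]; ring
  rw [heq] at h1 h3
  rw [hle] at h3
  have hL2 : 2 ≤ L := by nlinarith
  have hlogL : 1 < Real.log L := by nlinarith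
  have hLe : Real.exp 1 < L := by
    calc Real.exp 1 < Real.exp (Real.log L) := Real.exp_lt_exp.mpr hlogL
    _ = L := Real.exp_log hL0
  have hns0 : 0 < lam * L := mul_pos hlam hL0
  set N : ℕ := ⌈lam * L⌉₊ with hNdef
  have hNge : lam * L ≤ (N : ℝ) := Nat.le_ceil _
  have hN1 : 1 ≤ N := Nat.one_le_ceil_iff.mpr hns0
  have hNpos : (0:ℝ) < N := by exact_mod_cast Nat.lt_of_lt_of_le Nat.one_pos hN1
  set f : ℕ → ℝ := fun n =>
    if lam * L ≤ (n : ℝ) then Real.exp (-lam) * lam ^ n / (Nat.factorial n : ℝ) else 0 with hfdef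
  have hgoal : (∑' n : ℕ, if -lam * Real.log ε ≤ (n : ℝ) then
      Real.exp (-lam) * lam ^ n / (Nat.factorial n : ℝ) else 0) = ∑' n, f n := by
    simp only [heq, hfdef]
  rw [hgoal]
  -- summability
  have hg : Summable (fun n : ℕ => Real.exp (-lam) * (lam ^ n / (Nat.factorial n : ℝ))) :=
    (Real.summable_pow_div_factorial lam).mul_left _
  have hf : Summable f := by
    refine hg.of_nonneg_of_le (fun n => ?_) (fun n => ?_)
    · simp only [hfdef]; split
      · positivity
      · exact le_refl 0
    · simp only [hfdef]; split
      · rw [mul_div_assoc]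
      · positivity
  -- geometric comparison
  set C : ℝ := Real.exp (-lam) * lam ^ N / (Nat.factorial N : ℝ) with hCdef
  set r : ℝ := lam / N with hrdef
  have hr0 : 0 ≤ r := by positivity
  have hrL : r ≤ 1 / L := by
    have : lam / (N:ℝ) ≤ lam / (lam * L) := by gcongr
    rw [div_mul_eq_div_div, div_self (ne_of_gt hlam)] at this
    exact this
  have hr1 : r < 1 := lt_of_le_of_lt hrL (by
    rw [div_lt_one hL0]; linarith)
  have hC0 : 0 ≤ C := by positivity
  have hbound : ∀ k : ℕ, f (k + N) ≤ C * r ^ k := by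
    intro k
    have hcond : lam * L ≤ ((k + N : ℕ) : ℝ) := by
      push_cast; linarith [hNge, Nat.cast_nonneg (α := ℝ) k]
    have hfac : ((Nat.factorial N : ℝ) * (N:ℝ) ^ k) ≤ ((Nat.factorial (N + k) : ℝ)) := by
      exact_mod_cast fact_aux N k
    simp only [hfdef, if_pos hcond]
    have key : lam ^ (k + N) / (Nat.factorial (k + N) : ℝ)
        ≤ lam ^ N / (Nat.factorial N : ℝ) * (lam / N) ^ k := by
      rw [div_pow, div_mul_div_comm, ← pow_add, Nat.add_comm k N]
      gcongr
    calc Real.exp (-lam) * lam ^ (k + N) / (Nat.factorial (k + N) : ℝ)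
        = Real.exp (-lam) * (lam ^ (k + N) / (Nat.factorial (k + N) : ℝ)) := by ring
      _ ≤ Real.exp (-lam) * (lam ^ N / (Nat.factorial N : ℝ) * (lam / N) ^ k) := by
          gcongr
      _ = C * r ^ k := by rw [hCdef, hrdef]; ring
  -- shift the tsum
  have hshift : (∑' n, f n) = ∑' k, f (k + N) := by
    have hzero : ∑ i ∈ Finset.range N, f i = 0 := by
      refine Finset.sum_eq_zero (fun i hi => ?_)
      have : (i:ℝ) < lam * L := by
        exact_mod_cast Nat.lt_ceil.mp (Finset.mem_range.mp hi)
      simp only [hfdef, if_neg (not_le.mpr this)]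
    rw [← Summable.sum_add_tsum_nat_add N hf, hzero, zero_add]
  have hsum_shift : Summable (fun k => f (k + N)) := (summable_nat_add_iff N).mpr hf
  have hgeo : Summable (fun k : ℕ => C * r ^ k) :=
    (summable_geometric_of_lt_one hr0 hr1).mul_left C
  have hstep1 : (∑' n, f n) ≤ C * (1 - r)⁻¹ := by
    rw [hshift]
    calc (∑' k, f (k + N)) ≤ ∑' k, C * r ^ k := Summable.tsum_le_tsum hbound hsum_shift hgeo
      _ = C * (1 - r)⁻¹ := by rw [tsum_mul_left, tsum_geometric_of_lt_one hr0 hr1]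
  have h1L : 0 < 1 - 1 / L := by
    rw [sub_pos, div_lt_one hL0]; linarith
  have hstep2 : C * (1 - r)⁻¹ ≤ C * (1 - 1/L)⁻¹ := by
    gcongr <;> linarith
  -- Stirling bound : √π ≤ stirlingSeq N
  obtain ⟨m, hm⟩ : ∃ m, N = m + 1 := ⟨N - 1, by omega⟩
  have hsp : Real.sqrt π ≤ Stirling.stirlingSeq N := by
    rw [hm]
    have htend : Tendsto (Stirling.stirlingSeq ∘ Nat.succ) atTop (nhds (Real.sqrt π)) :=
      Stirling.tendsto_stirlingSeq_sqrt_pi.comp (tendsto_add_atTop_nat 1)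
    exact Stirling.stirlingSeq'_antitone.le_of_tendsto htend m
  have hdenpos : 0 < Real.sqrt (2 * (N:ℝ)) * ((N:ℝ) / Real.exp 1) ^ N := by positivity
  have hstirl : Real.sqrt π * (Real.sqrt (2 * (N:ℝ)) * ((N:ℝ) / Real.exp 1) ^ N)
      ≤ (Nat.factorial N : ℝ) := by
    have := hsp
    rw [Stirling.stirlingSeq, le_div_iff₀ hdenpos] at this
    exact this
  -- (lam e / N)^N ≤ ε
  have hb0 : 0 < Real.exp 1 / L := by positivity
  have hb1 : Real.exp 1 / L < 1 := by rw [div_lt_one hL0]; exact hLe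
  have hpow : (lam * Real.exp 1 / (N:ℝ)) ^ N ≤ ε := by
    have s1 : lam * Real.exp 1 / (N:ℝ) ≤ Real.exp 1 / L := by
      have h' : lam * Real.exp 1 / (N:ℝ) ≤ lam * Real.exp 1 / (lam * L) := by
        gcongr
      rw [show lam * Real.exp 1 / (lam * L) = Real.exp 1 / L by
        field_simp] at h'
      exact h'
    calc (lam * Real.exp 1 / (N:ℝ)) ^ N ≤ (Real.exp 1 / L) ^ N := by
          gcongr
      _ = (Real.exp 1 / L) ^ ((N:ℝ)) := by rw [Real.rpow_natCast]
      _ ≤ (Real.exp 1 / L) ^ (lam * L) :=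
          Real.rpow_le_rpow_of_exponent_ge hb0 hb1.le hNge
      _ = Real.exp (Real.log (Real.exp 1 / L) * (lam * L)) := by
          rw [Real.rpow_def_of_pos hb0]
      _ ≤ Real.exp (-L) := by
          apply Real.exp_le_exp.mpr
          rw [Real.log_div (Real.exp_ne_zero 1) (ne_of_gt hL0), Real.log_exp]
          nlinarith
      _ = ε := by rw [← hle, Real.exp_log hε0]
  have hlamN : lam ^ N ≤ ε * ((N:ℝ) / Real.exp 1) ^ N := by
    have : lam ^ N = (lam * Real.exp 1 / (N:ℝ)) ^ N * ((N:ℝ) / Real.exp 1) ^ N := by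
      rw [← mul_pow]
      congr 1
      field_simp
    rw [this]
    exact mul_le_mul_of_nonneg_right hpow (by positivity)
  -- bound C
  have hsqrt_le : Real.sqrt (2 * π * (lam * L)) ≤ Real.sqrt π * Real.sqrt (2 * (N:ℝ)) := by
    rw [← Real.sqrt_mul pi_pos.le]
    apply Real.sqrt_le_sqrt
    nlinarith [pi_pos]
  have hsqns : 0 < Real.sqrt (2 * π * (lam * L)) := Real.sqrt_pos.mpr (by positivity)
  have hCbound : C ≤ Real.exp (-lam) * ε / Real.sqrt (2 * π * (lam * L)) := by
    calc C ≤ Real.exp (-lam) * (ε * ((N:ℝ) / Real.exp 1) ^ N)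
            / (Real.sqrt π * (Real.sqrt (2 * (N:ℝ)) * ((N:ℝ) / Real.exp 1) ^ N)) := by
          rw [hCdef]
          gcongr
      _ = Real.exp (-lam) * ε / (Real.sqrt π * Real.sqrt (2 * (N:ℝ))) := by
          have hx : ((N:ℝ)/Real.exp 1)^N ≠ 0 := by positivity
          have hsp2 : Real.sqrt π ≠ 0 := by positivity
          have hs2N : Real.sqrt (2*(N:ℝ)) ≠ 0 := by positivity
          field_simp
      _ ≤ Real.exp (-lam) * ε / Real.sqrt (2 * π * (lam * L)) := by
          gcongr
  -- finish
  have hfinal : Real.exp (-lam) * ε / Real.sqrt (2 * π * (lam * L)) * (1 - 1/L)⁻¹ ≤ ε / 2 := by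
    have h3' : Real.exp (-lam) / (Real.sqrt (2 * π * (lam * L)) * (1 - 1/L)) ≤ 1/2 := by
      rw [show (1:ℝ) - 1/L = 1 + 1/(-L) by ring]
      exact h3
    have : Real.exp (-lam) * ε / Real.sqrt (2 * π * (lam * L)) * (1 - 1/L)⁻¹
        = ε * (Real.exp (-lam) / (Real.sqrt (2 * π * (lam * L)) * (1 - 1/L))) := by
      field_simp
    rw [this]
    calc ε * (Real.exp (-lam) / (Real.sqrt (2 * π * (lam * L)) * (1 - 1/L)))
        ≤ ε * (1/2) := mul_le_mul_of_nonneg_left h3' hε0.le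
      _ = ε / 2 := by ring
  calc (∑' n, f n) ≤ C * (1 - r)⁻¹ := hstep1
    _ ≤ C * (1 - 1/L)⁻¹ := hstep2
    _ ≤ Real.exp (-lam) * ε / Real.sqrt (2 * π * (lam * L)) * (1 - 1/L)⁻¹ := by
        gcongr
    _ ≤ ε / 2 := hfinal
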